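/- Let g be a Lie algebra with nonzero center and θ a cyclic 2-cocycle of g. Suppose there exist a nonzero central element X ∈ Z(g) and a nonzero scalar a ∈ ℂ such that θ(X,Y) = a·X*∘ad(Y) for all Y ∈ g, where X* is a linear form with X*(X) = 1 (the dual form of X relative to a basis). Then in the T*-extension T*_θ(g), the element X − aX* is central, and B(X − aX*, X − aX*) = −2a ≠ 0; hence T*_θ(g) is decomposable. -/

import Mathlib

/-- Let `g` have a nonzero central element `X` and `θ` be a cyclic
2-cocycle with `θ(X,Y) = a·X* ∘ ad(Y)` for all `Y`, with `a ≠ 0` and `X*(X) = 1`.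
Then in `T*_θ(g)` the element `X − aX*` is central, `B(X − aX*, X − aX*) = −2a ≠ 0`,
and hence `T*_θ(g)` is decomposable. -/
theorem stmt_10 (L : Type*) [LieRing L] [LieAlgebra ℂ L] [FiniteDimensional ℂ L]
    (θ : L → L → Module.Dual ℂ L)
    (hθskew : ∀ x y, θ x y = - θ y x)
    (hθlin : ∀ (a : ℂ) (x x' y : L), θ (a • x + x') y = a • θ x y + θ x' y)
    (hcocycle : ∀ x y z w : L,
      θ x y ⁅z, w⁆ + θ ⁅x, y⁆ z w + θ y z ⁅x, w⁆ + θ ⁅y, z⁆ x w +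
        θ z x ⁅y, w⁆ + θ ⁅z, x⁆ y w = 0)
    (hcyclic : ∀ x y z : L, θ x y z = θ y z x)
    (X : L) (hXne : X ≠ 0) (hXcentral : ∀ y : L, ⁅X, y⁆ = 0)
    (a : ℂ) (ha : a ≠ 0)
    (Xstar : Module.Dual ℂ L) (hXstar : Xstar X = 1)
    (hθX : ∀ y w : L, θ X y w = a * Xstar ⁅y, w⁆)
    (br : L × Module.Dual ℂ L → L × Module.Dual ℂ L → L × Module.Dual ℂ L)
    (hbr1 : ∀ u v, (br u v).1 = ⁅u.1, v.1⁆)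
    (hbr2 : ∀ u v (w : L),
      (br u v).2 w = - v.2 ⁅u.1, w⁆ + u.2 ⁅v.1, w⁆ + θ u.1 v.1 w)
    (Bb : L × Module.Dual ℂ L → L × Module.Dual ℂ L → ℂ)
    (hBb : ∀ u v, Bb u v = u.2 v.1 + v.2 u.1) :
    -- `X − aX*` is central in the T*-extension
    (∀ v, br (X, -(a • Xstar)) v = 0) ∧ (∀ v, br v (X, -(a • Xstar)) = 0) ∧
    -- `B(X − aX*, X − aX*) = −2a`
    Bb (X, -(a • Xstar)) (X, -(a • Xstar)) = -(2 * a) ∧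
    -- hence `T*_θ(g)` is decomposable
    (∃ U : Submodule ℂ (L × Module.Dual ℂ L),
      U ≠ ⊥ ∧ U ≠ ⊤ ∧
      (∀ p ∈ U, ∀ v, br p v ∈ U ∧ br v p ∈ U) ∧
      (∀ p ∈ U, (∀ q ∈ U, Bb p q = 0) → p = 0)) := by
  set e : L × Module.Dual ℂ L := (X, -(a • Xstar)) with he
  have hθ0 : ∀ y : L, θ 0 y = 0 := by
    intro y
    have h := hθlin 1 0 0 y
    simp only [one_smul, add_zero, zero_add] at h
    exact (right_eq_add.mp h)
  have hθsmul : ∀ (c : ℂ) (x y : L), θ (c • x) y = c • θ x y := by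
    intro c x y
    have h := hθlin c x 0 y
    simpa [hθ0] using h
  have hXcentral' : ∀ y : L, ⁅y, X⁆ = 0 := by
    intro y
    rw [← lie_skew, hXcentral, neg_zero]
  -- left centrality (for scalar multiples of e)
  have hleft : ∀ (c : ℂ) (v : L × Module.Dual ℂ L), br (c • e) v = 0 := by
    intro c v
    refine Prod.ext ?_ ?_
    · rw [hbr1]
      simp [he, hXcentral]
    · apply LinearMap.ext
      intro w
      rw [hbr2]
      simp only [he, Prod.smul_fst, Prod.smul_snd, smul_lie, hXcentral, smul_zero, map_zero,
        neg_zero, zero_add]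
      rw [hθsmul]
      simp only [LinearMap.smul_apply, LinearMap.neg_apply, smul_eq_mul, hθX, Prod.snd_zero,
        LinearMap.zero_apply]
      ring
  have hright : ∀ (c : ℂ) (v : L × Module.Dual ℂ L), br v (c • e) = 0 := by
    intro c v
    refine Prod.ext ?_ ?_
    · rw [hbr1]
      simp [he, hXcentral']
    · apply LinearMap.ext
      intro w
      rw [hbr2]
      have hθswap : θ v.1 (c • X) w = -(c * (a * Xstar ⁅v.1, w⁆)) := by
        rw [hθskew, hθsmul]
        simp only [LinearMap.neg_apply, LinearMap.smul_apply, smul_eq_mul, hθX]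
      simp only [he, Prod.smul_fst, Prod.smul_snd, hXcentral, smul_lie, map_zero, smul_zero]
      rw [hθswap]
      simp only [LinearMap.smul_apply, LinearMap.neg_apply, smul_eq_mul, Prod.snd_zero,
        LinearMap.zero_apply]
      ring
  have hene : e ≠ 0 := by
    intro h
    exact hXne (congrArg Prod.fst h)
  refine ⟨?_, ?_, ?_, ?_⟩
  · intro v; simpa using hleft 1 v
  · intro v; simpa using hright 1 v
  · rw [hBb]
    simp [he, hXstar]
    ring
  · refine ⟨Submodule.span ℂ {e}, ?_, ?_, ?_, ?_⟩
    · simp [Submodule.span_singleton_eq_bot, hene]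
    · intro htop
      have hmem : (0, Xstar) ∈ Submodule.span ℂ ({e} : Set (L × Module.Dual ℂ L)) := by
        rw [htop]; trivial
      rcases Submodule.mem_span_singleton.mp hmem with ⟨c, hc⟩
      have h1 : c • X = 0 := congrArg Prod.fst hc
      have hc0 : c = 0 := by
        by_contra hcne
        exact hXne (by simpa [hcne] using congrArg (fun z => c⁻¹ • z) h1)
      have h2 : c • (-(a • Xstar)) = Xstar := congrArg Prod.snd hc
      rw [hc0, zero_smul] at h2
      have h3 : Xstar X = 0 := by rw [← h2]; simp
      rw [hXstar] at h3
      exact one_ne_zero h3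
    · intro p hp v
      rcases Submodule.mem_span_singleton.mp hp with ⟨c, hc⟩
      rw [← hc, hleft c v, hright c v]
      exact ⟨Submodule.zero_mem _, Submodule.zero_mem _⟩
    · intro p hp hB
      rcases Submodule.mem_span_singleton.mp hp with ⟨c, hc⟩
      have heU : e ∈ Submodule.span ℂ ({e} : Set (L × Module.Dual ℂ L)) :=
        Submodule.mem_span_singleton_self e
      have hBe := hB e heU
      rw [hBb, ← hc] at hBe
      simp only [he, Prod.smul_fst, Prod.smul_snd, LinearMap.smul_apply, LinearMap.neg_apply,
        smul_eq_mul, map_smul, hXstar, mul_one] at hBe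
      have hc0 : c = 0 := by
        have h4 : (-2 * a) * c = 0 := by linear_combination hBe
        rcases mul_eq_zero.mp h4 with h | h
        · exact absurd (by linear_combination -h/2 : a = 0) ha
        · exact h
      rw [← hc, hc0, zero_smul]
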